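/- If a group G has BVC, then every finite index subgroup of G also has BVC. -/

import Mathlib

def IsVirtuallyCyclic (G : Type*) [Group G] : Prop :=
  ∃ H : Subgroup G, IsCyclic H ∧ H.FiniteIndex

def HasBVC (G : Type*) [Group G] : Prop :=
  ∃ S : Finset (Subgroup G), (∀ V ∈ S, IsVirtuallyCyclic V) ∧
    ∀ W : Subgroup G, IsVirtuallyCyclic W →
      ∃ V ∈ S, ∃ g : G, W.map (MulAut.conj g).toMonoidHom ≤ V

lemma vc_of_mulEquiv {G G' : Type*} [Group G] [Group G'] (e : G ≃* G')
    (h : IsVirtuallyCyclic G) : IsVirtuallyCyclic G' := by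
  obtain ⟨K, hc, hfi⟩ := h
  refine ⟨K.map e.toMonoidHom, ?_, ?_⟩
  · exact isCyclic_of_surjective (e.subgroupMap K) (e.subgroupMap K).surjective
  · constructor
    rw [Subgroup.index_map_eq K e.surjective (le_of_eq_of_le ((MonoidHom.ker_eq_bot_iff _).mpr e.injective) bot_le)]
    exact hfi.index_ne_zero

lemma vc_subgroup {G : Type*} [Group G] (h : IsVirtuallyCyclic G) (K : Subgroup G) :
    IsVirtuallyCyclic K := by
  obtain ⟨C, hc, hfi⟩ := h
  haveI := hc
  haveI := hfi
  have e1 : (C ⊓ K).subgroupOf C ≃* (C ⊓ K : Subgroup G) :=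
    Subgroup.subgroupOfEquivOfLe inf_le_left
  have hck : IsCyclic (C ⊓ K : Subgroup G) := isCyclic_of_surjective e1 e1.surjective
  have e2 : C.subgroupOf K ≃* ((C.subgroupOf K).map K.subtype) :=
    Subgroup.equivMapOfInjective _ _ K.subtype_injective
  rw [Subgroup.subgroupOf_map_subtype] at e2
  exact ⟨C.subgroupOf K, isCyclic_of_surjective e2.symm e2.symm.surjective, inferInstance⟩

lemma vc_subgroupOf {G : Type*} [Group G] {X : Subgroup G} (K : Subgroup G)
    (hX : IsVirtuallyCyclic X) : IsVirtuallyCyclic (X.subgroupOf K) := by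
  have h1 : IsVirtuallyCyclic ((X ⊓ K).subgroupOf X) := vc_subgroup hX _
  have e1 : (X ⊓ K).subgroupOf X ≃* (X ⊓ K : Subgroup G) :=
    Subgroup.subgroupOfEquivOfLe inf_le_left
  have e2 : X.subgroupOf K ≃* ((X.subgroupOf K).map K.subtype) :=
    Subgroup.equivMapOfInjective _ _ K.subtype_injective
  rw [Subgroup.subgroupOf_map_subtype] at e2
  exact vc_of_mulEquiv (e1.trans e2.symm) h1

theorem stmt_4 {G : Type*} [Group G] (H : Subgroup G) [H.FiniteIndex]
    (hG : HasBVC G) : HasBVC H := by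
  classical
  obtain ⟨S, hS1, hS2⟩ := hG
  haveI : Finite (G ⧸ H) := H.finite_quotient_of_finiteIndex
  haveI : Fintype (G ⧸ H) := Fintype.ofFinite _
  set f : Subgroup G → G ⧸ H → Subgroup H := fun V q =>
    (V.map (MulAut.conj (Quotient.out q)⁻¹).toMonoidHom).subgroupOf H with hf
  refine ⟨(S ×ˢ (Finset.univ : Finset (G ⧸ H))).image (fun p => f p.1 p.2), ?_, ?_⟩
  · intro U hU
    simp only [Finset.mem_image, Finset.mem_product, Finset.mem_univ, and_true] at hU
    obtain ⟨⟨V, q⟩, hV, rfl⟩ := hU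
    refine vc_subgroupOf _ ?_
    have hVvc := hS1 V hV
    exact vc_of_mulEquiv ((MulAut.conj (Quotient.out q)⁻¹ :
      G ≃* G).subgroupMap V) hVvc
  · intro W hW
    have hW' : IsVirtuallyCyclic (W.map H.subtype) :=
      vc_of_mulEquiv (Subgroup.equivMapOfInjective W H.subtype H.subtype_injective) hW
    obtain ⟨V, hV, g, hg⟩ := hS2 (W.map H.subtype) hW'
    set q : G ⧸ H := QuotientGroup.mk g with hq
    set t : G := Quotient.out q with ht
    have hmem : t⁻¹ * g ∈ H := by
      have : (QuotientGroup.mk t : G ⧸ H) = QuotientGroup.mk g := QuotientGroup.out_eq' q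
      exact QuotientGroup.eq.mp this
    refine ⟨f V q, ?_, ⟨t⁻¹ * g, hmem⟩, ?_⟩
    · exact Finset.mem_image.mpr ⟨(V, q), Finset.mem_product.mpr
        ⟨hV, Finset.mem_univ _⟩, rfl⟩
    · rw [hf]
      simp only [Subgroup.subgroupOf]
      rw [← Subgroup.map_le_iff_le_comap]
      intro x hx
      simp only [Subgroup.mem_map, MulEquiv.coe_toMonoidHom, MulAut.conj_apply] at hx ⊢
      obtain ⟨y, ⟨w, hw, rfl⟩, rfl⟩ := hx
      refine ⟨g * (↑w) * g⁻¹, ?_, ?_⟩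
      · exact hg ⟨↑w, ⟨w, hw, rfl⟩, rfl⟩
      · simp only [Subgroup.coe_subtype, MulMemClass.coe_mul, InvMemClass.coe_inv]
        group
        rw [ht]
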